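/- arXiv:math/0409559 — 2 statements merged into one kernel-verified Lean document; each statement's English description precedes it below -/
import Mathlib

section
/- Let W be a finite-dimensional representation of the Borel subalgebra 𝔟 = span{H, X} of sl(2,ℂ) ([H,X] = 2X) on which H acts diagonalizably. If W is indecomposable, then the eigenvalues of H on W form an arithmetic progression k, k-2, ..., k-2n for some integer n ≥ 0, each with multiplicity one. -/
/-- Let `W` be a nonzero finite-dimensional representation of the Borel subalgebra
`𝔟 = span{H, X}` of `sl(2, ℂ)` (so `[H, X] = 2X`), given by endomorphisms `ρH, ρX`,
on which `ρH` acts diagonalizably.  If `W` is indecomposable, then the eigenvalues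
of `ρH` form an arithmetic progression `k, k - 2, …, k - 2m`, each with multiplicity
one: there is an eigenbasis `e l` with `ρH (e l) = (k - 2l) • e l`. -/
theorem indecomposable_borel_rep_eigenvalues (W : Type*) [AddCommGroup W] [Module ℂ W]
    [FiniteDimensional ℂ W] [Nontrivial W]
    (ρH ρX : Module.End ℂ W)
    (hcomm : ρH * ρX - ρX * ρH = 2 • ρX)
    (hdiag : ∃ (ι : Type) (b : Module.Basis ι ℂ W) (c : ι → ℂ), ∀ i, ρH (b i) = c i • b i)
    (hindec : ∀ U V : Submodule ℂ W,
      Submodule.map ρH U ≤ U → Submodule.map ρX U ≤ U →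
      Submodule.map ρH V ≤ V → Submodule.map ρX V ≤ V →
      IsCompl U V → U = ⊥ ∨ V = ⊥) :
    ∃ (k : ℂ) (m : ℕ) (e : Module.Basis (Fin (m + 1)) ℂ W),
      Module.finrank ℂ W = m + 1 ∧
      ∀ l : Fin (m + 1), ρH (e l) = (k - 2 * (l : ℕ)) • e l := by
  classical
  obtain ⟨ι, b, c, hb⟩ := hdiag
  set N := ρX with hN
  -- the commutation relation, applied to elements
  have hc : ∀ x : W, ρH (N x) = N (ρH x) + (2 : ℂ) • N x := by
    intro x
    have h := LinearMap.ext_iff.mp hcomm x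
    simp only [LinearMap.sub_apply, Module.End.mul_apply, LinearMap.smul_apply] at h
    have h2 : (2 : ℕ) • N x = (2 : ℂ) • N x := by
      rw [two_smul, two_smul]
    rw [sub_eq_iff_eq_add] at h
    rw [h, h2]; abel
  -- iterated commutation relation
  have hA : ∀ (j : ℕ) (x : W), ρH ((N ^ j) x) = (N ^ j) (ρH x) + (2 * (j : ℂ)) • (N ^ j) x := by
    intro j
    induction j with
    | zero => intro x; simp
    | succ j ih =>
      intro x
      have hp : (N ^ (j + 1)) = N ^ j * N := pow_succ N j
      rw [hp]
      simp only [Module.End.mul_apply]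
      rw [ih (N x), hc x, map_add, map_smul]
      push_cast
      module
  -- ρX is nilpotent
  have hnil : N ^ (Module.finrank ℂ W) = 0 := by
    set n := Module.finrank ℂ W with hn
    apply b.ext
    intro i
    rw [LinearMap.zero_apply]
    by_contra h
    have hw : ∀ j : Fin (n + 1), (N ^ (j : ℕ)) (b i) ≠ 0 := by
      intro j hj
      apply h
      have : N ^ n = N ^ (n - (j : ℕ)) * N ^ (j : ℕ) := by
        rw [← pow_add, Nat.sub_add_cancel (by omega : (j : ℕ) ≤ n)]
      rw [this, Module.End.mul_apply, hj, map_zero]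
    have heig : ∀ j : Fin (n + 1),
        ρH.HasEigenvector (c i + 2 * (j : ℕ)) ((N ^ (j : ℕ)) (b i)) := by
      intro j
      refine ⟨?_, hw j⟩
      rw [Module.End.mem_eigenspace_iff, hA, hb i, map_smul]
      module
    have hinj : Function.Injective (fun j : Fin (n + 1) => c i + 2 * ((j : ℕ) : ℂ)) := by
      intro a a' haa
      simp only [add_right_inj] at haa
      have : ((a : ℕ) : ℂ) = ((a' : ℕ) : ℂ) := by
        field_simp at haa; exact_mod_cast haa
      exact Fin.ext (by exact_mod_cast this)
    have hli := ρH.eigenvectors_linearIndependent' _ hinj _ heig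
    have hcard := hli.fintype_card_le_finrank
    simp [← hn] at hcard
  -- the nilpotency index
  have hex : ∃ p, N ^ p = 0 := ⟨_, hnil⟩
  have hppos : Nat.find hex ≠ 0 := by
    intro h0
    have h1 := Nat.find_spec hex
    rw [h0, pow_zero] at h1
    obtain ⟨x, hx⟩ := exists_ne (0 : W)
    exact hx (by simpa using LinearMap.ext_iff.mp h1 x)
  obtain ⟨r, hr⟩ : ∃ r, Nat.find hex = r + 1 := ⟨Nat.find hex - 1, by omega⟩
  have hNr : N ^ r ≠ 0 := Nat.find_min hex (by omega)
  have hNr1 : N ^ (r + 1) = 0 := hr ▸ Nat.find_spec hex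
  have hNs : ∀ s, r < s → (N ^ s : Module.End ℂ W) = 0 := by
    intro s hs
    have : N ^ s = N ^ (s - (r + 1)) * N ^ (r + 1) := by
      rw [← pow_add, Nat.sub_add_cancel (by omega)]
    rw [this, hNr1, mul_zero]
  -- choose a homogeneous vector surviving N^r
  obtain ⟨i0, hi0⟩ : ∃ i, (N ^ r) (b i) ≠ 0 := by
    by_contra h
    push_neg at h
    exact hNr (b.ext fun i => by simp [h i])
  set v := b i0 with hv
  set cv := c i0 with hcv
  have hvj : ∀ j : ℕ, ρH ((N ^ j) v) = (cv + 2 * (j : ℂ)) • (N ^ j) v := by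
    intro j
    rw [hA, hb i0, map_smul, ← hcv, ← hv]
    module
  set μ : ℂ := cv + 2 * r with hμ
  -- projection onto the μ-eigen-coordinates
  set π : W →ₗ[ℂ] W := b.constr ℂ (fun i => if c i = μ then b i else 0) with hπ
  have hπH : π ∘ₗ ρH = μ • π := by
    apply b.ext
    intro i
    simp only [LinearMap.comp_apply, hb i, map_smul, LinearMap.smul_apply, hπ,
      Module.Basis.constr_basis]
    split_ifs with h
    · rw [h]
    · simp
  have hcoord : ∀ (i : ι) (x : W), b.repr (ρH x) i = c i * b.repr x i := by
    intro i
    have hmap : (b.coord i) ∘ₗ ρH = c i • b.coord i := by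
      apply b.ext
      intro j
      simp only [LinearMap.comp_apply, hb j, map_smul, LinearMap.smul_apply,
        Module.Basis.coord_apply, Module.Basis.repr_self, smul_eq_mul]
      rcases eq_or_ne j i with rfl | hji
      · simp
      · simp [Finsupp.single_eq_of_ne' hji]
    intro x
    have := LinearMap.ext_iff.mp hmap x
    simpa using this
  have hproj : ∀ x : W, ρH x = μ • x → π x = x := by
    intro x hx
    have hkey : ∀ i, c i ≠ μ → b.repr x i = 0 := by
      intro i hi
      have h1 : c i * b.repr x i = μ * b.repr x i := by
        rw [← hcoord i x, hx]; simp
      have h2 : (c i - μ) * b.repr x i = 0 := by ring_nf; linear_combination h1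
      rcases mul_eq_zero.mp h2 with h | h
      · exact absurd (by linear_combination h) hi
      · exact h
    have hxsum : ((b.repr x).sum fun i a => a • b i) = x := by
      rw [← Finsupp.linearCombination_apply]
      exact b.linearCombination_repr x
    calc π x = π ((b.repr x).sum fun i a => a • b i) := by rw [hxsum]
    _ = (b.repr x).sum fun i a => a • (if c i = μ then b i else 0) := by
        rw [map_finsuppSum]
        exact Finsupp.sum_congr fun i _ => by rw [map_smul, hπ, Module.Basis.constr_basis]
    _ = (b.repr x).sum fun i a => a • b i := by
        apply Finsupp.sum_congr
        intro i hi
        rcases eq_or_ne (c i) μ with h | h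
        · rw [if_pos h]
        · exact absurd (hkey i h) (Finsupp.mem_support_iff.mp hi)
    _ = x := hxsum
  -- a homogeneous linear functional not vanishing on N^r v
  obtain ⟨i1, hi1⟩ : ∃ i, b.repr ((N ^ r) v) i ≠ 0 := by
    by_contra h
    push_neg at h
    apply hi0
    have : b.repr ((N ^ r) v) = 0 := Finsupp.ext h
    exact (LinearEquiv.map_eq_zero_iff b.repr).mp this
  set φ : W →ₗ[ℂ] ℂ := (b.coord i1) ∘ₗ π with hφ
  have hφH : ∀ x : W, φ (ρH x) = μ * φ x := by
    intro x
    have := LinearMap.ext_iff.mp hπH x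
    simp only [LinearMap.comp_apply, LinearMap.smul_apply] at this
    simp [hφ, LinearMap.comp_apply, this, smul_eq_mul]
  have hφNrv : φ ((N ^ r) v) ≠ 0 := by
    have hmem : ρH ((N ^ r) v) = μ • (N ^ r) v := by rw [hvj r, hμ]
    simpa [hφ, LinearMap.comp_apply, hproj _ hmem] using hi1
  -- the string family and the Gram-type matrix
  set g : Fin (r + 1) → W := fun j => (N ^ (j : ℕ)) v with hg
  set M : Matrix (Fin (r + 1)) (Fin (r + 1)) ℂ :=
    fun i j => φ ((N ^ ((i : ℕ) + (j : ℕ))) v) with hM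
  have hinj0 : ∀ a : Fin (r + 1) → ℂ, M.mulVec a = 0 → a = 0 := by
    intro a ha
    by_contra hne
    have hs : (Finset.univ.filter fun j => a j ≠ 0).Nonempty := by
      rw [Finset.filter_nonempty_iff]
      obtain ⟨j, hj⟩ := Function.ne_iff.mp hne
      exact ⟨j, Finset.mem_univ j, hj⟩
    set j0 := (Finset.univ.filter fun j => a j ≠ 0).min' hs with hj0def
    have hj0 : a j0 ≠ 0 := by
      have := Finset.min'_mem _ hs
      rw [Finset.mem_filter] at this
      exact this.2
    have hmin : ∀ j : Fin (r + 1), a j ≠ 0 → j0 ≤ j := by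
      intro j hj
      exact Finset.min'_le _ _ (Finset.mem_filter.mpr ⟨Finset.mem_univ j, hj⟩)
    set i : Fin (r + 1) := ⟨r - (j0 : ℕ), by omega⟩ with hi
    have h0 := congrFun ha i
    rw [Matrix.mulVec, Pi.zero_apply] at h0
    have hsum : ∑ j, M i j * a j = M i j0 * a j0 := by
      apply Finset.sum_eq_single j0
      · intro j _ hjne
        rcases lt_or_ge (j : ℕ) ((j0 : ℕ)) with hlt | hge
        · have : a j = 0 := by
            by_contra hja
            exact absurd (hmin j hja) (by intro hle; rw [Fin.le_def] at hle; omega)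
          rw [this, mul_zero]
        · have hgt : (j0 : ℕ) < (j : ℕ) := by
            rcases Nat.lt_or_ge (j0 : ℕ) (j : ℕ) with h' | h'
            · exact h'
            · exact absurd (Fin.ext (by omega)) hjne
          have : (N ^ ((i : ℕ) + (j : ℕ)) : Module.End ℂ W) = 0 := by
            apply hNs
            simp only [hi]
            omega
          rw [hM]
          simp only [this, LinearMap.zero_apply, map_zero, zero_mul]
      · intro h; exact absurd (Finset.mem_univ j0) h
    have hij0 : (i : ℕ) + (j0 : ℕ) = r := by
      simp only [hi]
      omega
    rw [dotProduct] at h0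
    rw [hsum] at h0
    rw [hM] at h0
    simp only [hij0] at h0
    exact hj0 (by
      rcases mul_eq_zero.mp h0 with h' | h'
      · exact absurd h' hφNrv
      · exact h')
  have hMinj : Function.Injective M.mulVecLin := by
    rw [← LinearMap.ker_eq_bot, LinearMap.ker_eq_bot']
    intro a ha
    exact hinj0 a ha
  have hMsurj : Function.Surjective M.mulVecLin :=
    (LinearMap.injective_iff_surjective).mp hMinj
  -- key computation
  have hTcalc : ∀ (a : Fin (r + 1) → ℂ) (i : Fin (r + 1)),
      φ ((N ^ (i : ℕ)) (∑ j, a j • g j)) = M.mulVec a i := by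
    intro a i
    rw [map_sum, map_sum, Matrix.mulVec, dotProduct]
    apply Finset.sum_congr rfl
    intro j _
    rw [map_smul, map_smul, smul_eq_mul, mul_comm, hg, hM]
    congr 2
    rw [← Module.End.mul_apply, ← pow_add]
  -- the invariant subspaces
  set U : Submodule ℂ W := Submodule.span ℂ (Set.range g) with hU
  set V : Submodule ℂ W := ⨅ i : Fin (r + 1), LinearMap.ker (φ ∘ₗ (N ^ (i : ℕ))) with hV
  have hVmem : ∀ x : W, x ∈ V ↔ ∀ i : Fin (r + 1), φ ((N ^ (i : ℕ)) x) = 0 := by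
    intro x
    simp [hV, Submodule.mem_iInf, LinearMap.mem_ker]
  have hUH : Submodule.map ρH U ≤ U := by
    rw [hU, Submodule.map_span_le]
    rintro _ ⟨j, rfl⟩
    rw [hg, hvj]
    exact Submodule.smul_mem _ _ (Submodule.subset_span ⟨j, rfl⟩)
  have hUX : Submodule.map N U ≤ U := by
    rw [hU, Submodule.map_span_le]
    rintro _ ⟨j, rfl⟩
    have hjx : N (g j) = (N ^ ((j : ℕ) + 1)) v := by
      rw [hg, pow_succ', Module.End.mul_apply]
    rcases lt_or_ge ((j : ℕ) + 1) (r + 1) with hlt | hge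
    · rw [hjx]
      exact Submodule.subset_span ⟨⟨(j : ℕ) + 1, hlt⟩, rfl⟩
    · have : ((j : ℕ) + 1) = r + 1 := by omega
      rw [hjx, this, hNr1]
      simp
  have hVH : Submodule.map ρH V ≤ V := by
    rintro _ ⟨x, hx, rfl⟩
    rw [hVmem]
    intro i
    have h1 : (N ^ (i : ℕ)) (ρH x) = ρH ((N ^ (i : ℕ)) x) - (2 * ((i : ℕ) : ℂ)) • (N ^ (i : ℕ)) x := by
      rw [hA]; abel
    rw [h1, map_sub, map_smul, hφH, (hVmem x).mp hx i]
    simp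
  have hVX : Submodule.map N V ≤ V := by
    rintro _ ⟨x, hx, rfl⟩
    rw [hVmem]
    intro i
    have hjx : (N ^ (i : ℕ)) (N x) = (N ^ ((i : ℕ) + 1)) x := by
      rw [pow_succ, Module.End.mul_apply]
    rcases lt_or_ge ((i : ℕ) + 1) (r + 1) with hlt | hge
    · rw [hjx]
      exact (hVmem x).mp hx ⟨(i : ℕ) + 1, hlt⟩
    · have : ((i : ℕ) + 1) = r + 1 := by omega
      rw [hjx, this, hNr1]
      simp
  have hcompl : IsCompl U V := by
    constructor
    · rw [disjoint_iff_inf_le]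
      rintro x ⟨hxU, hxV⟩
      obtain ⟨a, ha⟩ := (Submodule.mem_span_range_iff_exists_fun ℂ).mp hxU
      have hza : M.mulVec a = 0 := by
        funext i
        rw [← hTcalc a i, ha, Pi.zero_apply]
        exact (hVmem x).mp hxV i
      have : a = 0 := hinj0 a hza
      rw [← ha, this]
      simp
    · rw [codisjoint_iff_le_sup]
      intro w _
      obtain ⟨a, ha⟩ := hMsurj (fun i => φ ((N ^ (i : ℕ)) w))
      set u : W := ∑ j, a j • g j with hu
      have huU : u ∈ U := by
        apply Submodule.sum_mem
        intro j _
        exact Submodule.smul_mem _ _ (Submodule.subset_span ⟨j, rfl⟩)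
      have hwV : w - u ∈ V := by
        rw [hVmem]
        intro i
        rw [map_sub, map_sub, hu, hTcalc a i]
        have := congrFun ha i
        rw [Matrix.mulVecLin_apply] at this
        rw [this]
        simp
      have : w = u + (w - u) := by abel
      rw [this]
      exact Submodule.add_mem_sup huU hwV
  -- indecomposability forces V = ⊥, U = ⊤
  have hUne : U ≠ ⊥ := by
    intro h
    apply hi0
    have : (N ^ r) v ∈ U := Submodule.subset_span ⟨⟨r, by omega⟩, rfl⟩
    rw [h, Submodule.mem_bot] at this
    exact this
  have hVbot : V = ⊥ := by
    rcases hindec U V hUH hUX hVH hVX hcompl with h | h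
    · exact absurd h hUne
    · exact h
  have hUtop : U = ⊤ := by
    have := hcompl.sup_eq_top
    rw [hVbot, sup_bot_eq] at this
    exact this
  -- build the basis
  have hli : LinearIndependent ℂ g := by
    rw [Fintype.linearIndependent_iff]
    intro a ha
    have hza : M.mulVec a = 0 := by
      funext i
      rw [← hTcalc a i, ha]
      simp
    intro i
    rw [hinj0 a hza]
    rfl
  have hsp : ⊤ ≤ Submodule.span ℂ (Set.range g) := by
    rw [← hU, hUtop]
  set e0 : Module.Basis (Fin (r + 1)) ℂ W := Module.Basis.mk hli hsp with he0
  refine ⟨cv + 2 * r, r, e0.reindex (Fin.revPerm), ?_, ?_⟩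
  · rw [Module.finrank_eq_card_basis e0, Fintype.card_fin]
  · intro l
    have hel : (e0.reindex Fin.revPerm) l = (N ^ (r - (l : ℕ))) v := by
      rw [Module.Basis.reindex_apply, he0, Module.Basis.mk_apply]
      simp [hg, Fin.revPerm, Fin.val_rev]
    rw [hel, hvj (r - (l : ℕ))]
    congr 1
    have hlr : (l : ℕ) ≤ r := by omega
    rw [Nat.cast_sub hlr]
    ring
end

section
/- An indecomposable finite-dimensional representation of the Borel subalgebra 𝔟 = span{H, X} of sl(2,ℂ) with diagonalizable H-action and H-eigenvalues k, k-2, ..., k-2n extends to a representation of sl(2,ℂ) if and only if k = n. -/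
/-- An indecomposable finite-dimensional representation of the Borel subalgebra
`𝔟 = span{H, X}` of `sl(2, ℂ)` (with `[H, X] = 2X`, represented by `ρH, ρX`) whose
`H`-action is diagonal with eigenvalues `k, k - 2, …, k - 2m` extends to a
representation of `sl(2, ℂ)` (i.e. there exists `ρY` with `[ρH, ρY] = -2ρY` and
`[ρX, ρY] = ρH`) if and only if `k = m`. -/
theorem indecomposable_borel_rep_extends_iff (W : Type*) [AddCommGroup W] [Module ℂ W]
    [FiniteDimensional ℂ W] [Nontrivial W]
    (ρH ρX : Module.End ℂ W)
    (hcomm : ρH * ρX - ρX * ρH = 2 • ρX)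
    (hindec : ∀ U V : Submodule ℂ W,
      Submodule.map ρH U ≤ U → Submodule.map ρX U ≤ U →
      Submodule.map ρH V ≤ V → Submodule.map ρX V ≤ V →
      IsCompl U V → U = ⊥ ∨ V = ⊥)
    (k : ℂ) (m : ℕ) (e : Module.Basis (Fin (m + 1)) ℂ W)
    (hdiag : ∀ l : Fin (m + 1), ρH (e l) = (k - 2 * (l : ℕ)) • e l) :
    (∃ ρY : Module.End ℂ W,
      ρH * ρY - ρY * ρH = -(2 • ρY) ∧ ρX * ρY - ρY * ρX = ρH) ↔ k = m := by
  constructor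
  · rintro ⟨ρY, -, hXY⟩
    have htr : LinearMap.trace ℂ W ρH = 0 := by
      rw [← hXY, map_sub, LinearMap.trace_mul_comm, sub_self]
    rw [LinearMap.trace_eq_matrix_trace ℂ e] at htr
    have hdiagM : ∀ i : Fin (m+1), LinearMap.toMatrix e e ρH i i = k - 2 * (i:ℕ) := by
      intro i
      rw [LinearMap.toMatrix_apply, hdiag]
      simp
    rw [Matrix.trace] at htr
    simp only [Matrix.diag_apply, hdiagM] at htr
    have hsum : ∀ n : ℕ, (∑ i : Fin n, (k - 2 * ((i:ℕ):ℂ))) = n * k - n * (n - 1) := by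
      intro n
      induction n with
      | zero => simp
      | succ p ih =>
        rw [Fin.sum_univ_castSucc]
        simp only [Fin.coe_castSucc, Fin.val_last] at *
        rw [ih]
        push_cast
        ring
    rw [hsum (m+1)] at htr
    have h1 : ((m:ℂ) + 1) * (k - m) = 0 := by push_cast at htr ⊢; linear_combination htr
    have h2 : ((m:ℂ) + 1) ≠ 0 := Nat.cast_add_one_ne_zero m
    rcases mul_eq_zero.mp h1 with h | h
    · exact absurd h h2
    · exact sub_eq_zero.mp h
  · intro hk
    have hHrepr : ∀ (v : W) (j : Fin (m+1)), e.repr (ρH v) j = (k - 2*(j:ℕ)) * e.repr v j := by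
      intro v j
      conv_lhs => rw [← Module.Basis.sum_repr e v, map_sum]
      simp only [LinearMap.map_smul, hdiag, smul_smul, map_sum, map_smul, Module.Basis.repr_self,
        Finsupp.coe_finset_sum, Finset.sum_apply, Finsupp.smul_apply, Finsupp.single_apply]
      rw [Finset.sum_eq_single j]
      · simp [mul_comm]
      · intro b _ hb; simp [if_neg hb]
      · intro h; simp at h
    -- eigenvector property of X-image
    have hHX : ∀ l : Fin (m+1), ρH (ρX (e l)) = (k - 2*(l:ℕ) + 2) • ρX (e l) := by
      intro l
      have h := congrArg (fun f : Module.End ℂ W => f (e l)) hcomm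
      simp only [LinearMap.sub_apply, Module.End.mul_apply, LinearMap.smul_apply] at h
      rw [hdiag] at h
      have : ρH (ρX (e l)) - (k - 2*(l:ℕ)) • ρX (e l) = (2:ℕ) • ρX (e l) := by
        simpa [LinearMap.map_smul] using h
      have h2 : ρH (ρX (e l)) = (k - 2*(l:ℕ)) • ρX (e l) + (2:ℕ) • ρX (e l) := by
        rw [← this]; abel
      rw [h2, ← Nat.cast_smul_eq_nsmul ℂ, ← add_smul]
      norm_num
    have hXzero : ∀ l j : Fin (m+1), (l:ℕ) ≠ (j:ℕ) + 1 → e.repr (ρX (e l)) j = 0 := by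
      intro l j hlj
      have h1 := hHrepr (ρX (e l)) j
      rw [hHX l] at h1
      rw [map_smul, Finsupp.smul_apply, smul_eq_mul] at h1
      have h2 : ((k - 2*(l:ℕ) + 2) - (k - 2*(j:ℕ))) * e.repr (ρX (e l)) j = 0 := by
        linear_combination h1
      have h3 : (k - 2*(l:ℕ) + 2) - (k - 2*(j:ℕ)) ≠ 0 := by
        intro h
        have h4 : ((j:ℕ):ℂ) + 1 = ((l:ℕ):ℂ) := by linear_combination h/2
        have h5 : (j:ℕ) + 1 = (l:ℕ) := by exact_mod_cast h4
        exact hlj h5.symm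
      exact (mul_eq_zero.mp h2).resolve_left h3
    -- ρX kills e_0
    have hX0 : ρX (e ⟨0, Nat.succ_pos m⟩) = 0 := by
      have h := Module.Basis.sum_repr e (ρX (e ⟨0, Nat.succ_pos m⟩))
      rw [← h]
      apply Finset.sum_eq_zero
      intro j _
      rw [hXzero _ j (by simp), zero_smul]
    -- ρX maps e_{i+1} into the line through e_i
    have hXspan : ∀ (i : ℕ) (hi : i < m),
        ρX (e ⟨i+1, Nat.succ_lt_succ hi⟩)
          = (e.repr (ρX (e ⟨i+1, Nat.succ_lt_succ hi⟩)) ⟨i, Nat.lt_succ_of_lt hi⟩)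
              • e ⟨i, Nat.lt_succ_of_lt hi⟩ := by
      intro i hi
      have h := Module.Basis.sum_repr e (ρX (e ⟨i+1, Nat.succ_lt_succ hi⟩))
      conv_lhs => rw [← h]
      refine Finset.sum_eq_single _ ?_ ?_
      · intro b _ hb
        rw [hXzero _ b (by simpa using fun hh => hb (by apply Fin.ext; simpa using hh.symm)), zero_smul]
      · intro hmem; exact absurd (Finset.mem_univ _) hmem
    -- the coefficients are nonzero by indecomposability
    have hcne : ∀ (i : ℕ) (hi : i < m),
        e.repr (ρX (e ⟨i+1, Nat.succ_lt_succ hi⟩)) ⟨i, Nat.lt_succ_of_lt hi⟩ ≠ 0 := by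
      intro i hi hzero
      have hXi1 : ρX (e ⟨i+1, Nat.succ_lt_succ hi⟩) = 0 := by
        rw [hXspan i hi, hzero, zero_smul]
      set S : Set (Fin (m+1)) := {j | (j:ℕ) ≤ i} with hS
      set U : Submodule ℂ W := Submodule.span ℂ (e '' S) with hU
      set V : Submodule ℂ W := Submodule.span ℂ (e '' Sᶜ) with hV
      have memU : ∀ j : Fin (m+1), (j:ℕ) ≤ i → e j ∈ U :=
        fun j hj => Submodule.subset_span ⟨j, hj, rfl⟩
      have memV : ∀ j : Fin (m+1), i < (j:ℕ) → e j ∈ V :=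
        fun j hj => Submodule.subset_span ⟨j, not_le.mpr hj, rfl⟩
      have hXbasis : ∀ j : Fin (m+1), ∀ P : Submodule ℂ W,
          (0 : W) ∈ P →
          (∀ p (hp : p < m), (j:ℕ) = p + 1 → e ⟨p, Nat.lt_succ_of_lt hp⟩ ∈ P) →
          ρX (e j) ∈ P := by
        intro j P h0 hstep
        rcases j with ⟨jv, hjv⟩
        match jv, hjv with
        | 0, hjv => rw [show (⟨0, hjv⟩ : Fin (m+1)) = ⟨0, Nat.succ_pos m⟩ from rfl, hX0]; exact h0
        | (p+1), hjv =>
          have hp : p < m := Nat.lt_of_succ_lt_succ hjv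
          rw [show (⟨p+1, hjv⟩ : Fin (m+1)) = ⟨p+1, Nat.succ_lt_succ hp⟩ from rfl, hXspan p hp]
          exact Submodule.smul_mem _ _ (hstep p hp rfl)
      have hHU : Submodule.map ρH U ≤ U := by
        rw [hU, Submodule.map_span_le]
        rintro x ⟨j, hj, rfl⟩
        rw [hdiag]
        exact Submodule.smul_mem _ _ (memU j hj)
      have hHV : Submodule.map ρH V ≤ V := by
        rw [hV, Submodule.map_span_le]
        rintro x ⟨j, hj, rfl⟩
        rw [hdiag]
        exact Submodule.smul_mem _ _ (memV j (not_le.mp hj))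
      have hXU : Submodule.map ρX U ≤ U := by
        rw [hU, Submodule.map_span_le]
        rintro x ⟨j, hj, rfl⟩
        simp only [hS, Set.mem_setOf_eq] at hj
        refine hXbasis j U (zero_mem U) ?_
        intro p hp hjp
        exact memU ⟨p, Nat.lt_succ_of_lt hp⟩ (show p ≤ i by omega)
      have hXV : Submodule.map ρX V ≤ V := by
        rw [hV, Submodule.map_span_le]
        rintro x ⟨j, hj, rfl⟩
        have hji : i < (j:ℕ) := not_le.mp hj
        by_cases hcase : (j:ℕ) = i + 1
        · have : j = ⟨i+1, Nat.succ_lt_succ hi⟩ := Fin.ext hcase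
          rw [this, hXi1]; exact zero_mem V
        · refine hXbasis j V (zero_mem V) ?_
          intro p hp hjp
          exact memV ⟨p, Nat.lt_succ_of_lt hp⟩ (show i < p by omega)
      have hcompl : IsCompl U V := by
        constructor
        · exact e.linearIndependent.disjoint_span_image disjoint_compl_right
        · rw [codisjoint_iff, hU, hV, ← Submodule.span_union, ← Set.image_union,
            Set.union_compl_self, Set.image_univ, Module.Basis.span_eq]
      rcases hindec U V hHU hXU hHV hXV hcompl with h | h
      · rw [Submodule.eq_bot_iff] at h
        exact e.ne_zero _ (h _ (memU ⟨0, Nat.succ_pos m⟩ (Nat.zero_le i)))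
      · rw [Submodule.eq_bot_iff] at h
        exact e.ne_zero _ (h _ (memV ⟨m, Nat.lt_succ_self m⟩ hi))
    subst hk
    -- construct ρY
    set c : ∀ i : ℕ, i < m → ℂ := fun i hi =>
      e.repr (ρX (e ⟨i+1, Nat.succ_lt_succ hi⟩)) ⟨i, Nat.lt_succ_of_lt hi⟩ with hc
    set d : Fin (m+1) → W := fun l =>
      if h : (l:ℕ) < m then
        (((((l:ℕ)):ℂ)+1) * ((m:ℂ)-((l:ℕ):ℂ)) / c (l:ℕ) h) • e ⟨(l:ℕ)+1, Nat.succ_lt_succ h⟩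
      else 0 with hd
    refine ⟨e.constr ℂ d, ?_, ?_⟩
    · -- [H, Y] = -2Y
      apply e.ext
      intro l
      rcases l with ⟨i, hil⟩
      simp only [LinearMap.sub_apply, Module.End.mul_apply, LinearMap.neg_apply,
        LinearMap.smul_apply, Module.Basis.constr_basis]
      by_cases h : i < m
      · rw [show d ⟨i, hil⟩ = ((((i:ℕ):ℂ)+1) * ((m:ℂ)-((i:ℕ):ℂ)) / c i h) • e ⟨i+1, Nat.succ_lt_succ h⟩ from dif_pos h]
        rw [hdiag ⟨i, hil⟩, map_smul, map_smul, Module.Basis.constr_basis,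
          show d ⟨i, hil⟩ = ((((i:ℕ):ℂ)+1) * ((m:ℂ)-((i:ℕ):ℂ)) / c i h) • e ⟨i+1, Nat.succ_lt_succ h⟩ from dif_pos h,
          hdiag ⟨i+1, Nat.succ_lt_succ h⟩]
        push_cast
        match_scalars
        ring
      · rw [show d ⟨i, hil⟩ = 0 from dif_neg h, hdiag ⟨i, hil⟩, map_smul, map_zero,
          Module.Basis.constr_basis, show d ⟨i, hil⟩ = 0 from dif_neg h]
        simp
    · -- [X, Y] = H
      apply e.ext
      intro l
      rcases l with ⟨i, hil⟩
      simp only [LinearMap.sub_apply, Module.End.mul_apply, Module.Basis.constr_basis]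
      rw [hdiag ⟨i, hil⟩]
      match i, hil with
      | 0, hil =>
        by_cases h : 0 < m
        · rw [show d ⟨0, hil⟩ = ((((0:ℕ):ℂ)+1) * ((m:ℂ)-((0:ℕ):ℂ)) / c 0 h) • e ⟨0+1, Nat.succ_lt_succ h⟩ from dif_pos h]
          rw [show (⟨0, hil⟩ : Fin (m+1)) = ⟨0, Nat.succ_pos m⟩ from rfl, hX0, map_zero, map_smul,
            hXspan 0 h]
          rw [smul_smul, sub_zero]
          rw [show e.repr (ρX (e ⟨0+1, Nat.succ_lt_succ h⟩)) ⟨0, Nat.lt_succ_of_lt h⟩ = c 0 h from rfl]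
          rw [div_mul_cancel₀ _ (hcne 0 h)]
          push_cast
          ring_nf
        · -- m = 0 : i = 0 = m
          have hm : m = 0 := Nat.eq_zero_of_not_pos h
          rw [show d ⟨0, hil⟩ = 0 from dif_neg h,
            show (⟨0, hil⟩ : Fin (m+1)) = ⟨0, Nat.succ_pos m⟩ from rfl, hX0, map_zero, map_zero]
          subst hm
          norm_num
      | (p+1), hil =>
        have hp : p < m := Nat.lt_of_succ_lt_succ hil
        rw [show (⟨p+1, hil⟩ : Fin (m+1)) = ⟨p+1, Nat.succ_lt_succ hp⟩ from rfl,
          hXspan p hp, map_smul, Module.Basis.constr_basis,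
          show d ⟨p, Nat.lt_succ_of_lt hp⟩ = ((((p:ℕ):ℂ)+1) * ((m:ℂ)-((p:ℕ):ℂ)) / c p hp) • e ⟨p+1, Nat.succ_lt_succ hp⟩ from dif_pos hp]
        by_cases h : p + 1 < m
        · rw [show d ⟨p+1, Nat.succ_lt_succ hp⟩ = (((((p+1:ℕ)):ℂ)+1) * ((m:ℂ)-(((p+1:ℕ)):ℂ)) / c (p+1) h) • e ⟨(p+1)+1, Nat.succ_lt_succ h⟩ from dif_pos h,
            map_smul, hXspan (p+1) h]
          rw [show e.repr (ρX (e ⟨(p+1)+1, Nat.succ_lt_succ h⟩)) ⟨p+1, Nat.lt_succ_of_lt h⟩ = c (p+1) h from rfl]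
          rw [show e.repr (ρX (e ⟨p+1, Nat.succ_lt_succ hp⟩)) ⟨p, Nat.lt_succ_of_lt hp⟩ = c p hp from rfl]
          rw [smul_smul, smul_smul, div_mul_cancel₀ _ (hcne (p+1) h), ← sub_smul]
          congr 1
          have hne : c p hp ≠ 0 := hcne p hp
          simp only [Fin.val_mk]
          field_simp
          push_cast
          ring
        · -- p + 1 = m
          have hm : p + 1 = m := by omega
          rw [show d ⟨p+1, Nat.succ_lt_succ hp⟩ = 0 from dif_neg h, map_zero,
            show e.repr (ρX (e ⟨p+1, Nat.succ_lt_succ hp⟩)) ⟨p, Nat.lt_succ_of_lt hp⟩ = c p hp from rfl]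
          rw [smul_smul, zero_sub, ← neg_smul]
          congr 1
          have hne : c p hp ≠ 0 := hcne p hp
          have hmc : (m:ℂ) = (p:ℂ) + 1 := by exact_mod_cast congrArg (Nat.cast : ℕ → ℂ) hm.symm
          simp only [Fin.val_mk]
          field_simp [hmc]
          push_cast
          rw [hmc]
          ring
end
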